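/- As λ → 0⁺, the until-N branching-based kernel of order h converges to the sum of walk-count kernels of lengths 0 through h−1: lim_{λ→0} K^{until-h}_Branch(G_1,G_2) = Σ_{n=0}^{h−1} K^n_Walk(G_1,G_2). -/

import Mathlib

open scoped Classical

/-- A finite labeled directed graph: vertices `V`, edge relation `E`, vertex
labels `lv` and edge labels `le`, all labels taken in the alphabet `A`. -/
structure LGraph (A : Type) where
  V : Type
  [fintypeV : Fintype V]
  [decEqV : DecidableEq V]
  E : V → V → Prop
  [decE : DecidableRel E]
  lv : V → A
  le : V → V → A

attribute [instance] LGraph.fintypeV LGraph.decEqV LGraph.decE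

/-- A labeled rooted tree: a root label together with the list of children,
each child carrying the label of the edge connecting it to its parent and
the corresponding labeled subtree. -/
inductive LTree (A : Type) : Type where
  | node : A → List (A × LTree A) → LTree A

namespace LTree

variable {A : Type}

-- `size t` : number of nodes
mutual
def size : LTree A → ℕ
  | .node _ cs => 1 + sizeList cs
def sizeList : List (A × LTree A) → ℕ
  | [] => 0
  | (_, t) :: rest => size t + sizeList rest
end

-- `depth t` : maximal number of edges from the root to a node, plus one
mutual
def depth : LTree A → ℕ
  | .node _ cs => 1 + depthList cs
def depthList : List (A × LTree A) → ℕ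
  | [] => 0
  | (_, t) :: rest => max (depth t) (depthList rest)
end

-- `leaves t` : number of leaf nodes
mutual
def leaves : LTree A → ℕ
  | .node _ [] => 1
  | .node _ (c :: cs) => leavesList (c :: cs)
def leavesList : List (A × LTree A) → ℕ
  | [] => 0
  | (_, t) :: rest => leaves t + leavesList rest
end

/-- branching cardinality: number of leaves minus one -/
def branch (t : LTree A) : ℕ := t.leaves - 1

-- `balanced t h` : `t` is perfectly depth-balanced of order `h` (every leaf at depth `h`)
mutual
def balanced : LTree A → ℕ → Prop
  | .node _ [], h => h = 1
  | .node _ (c :: cs), h => balancedList (c :: cs) (h - 1) ∧ 2 ≤ h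
def balancedList : List (A × LTree A) → ℕ → Prop
  | [], _ => True
  | (_, t) :: rest, h => balanced t h ∧ balancedList rest h
end

end LTree

/-- A tree of graph vertices: the candidate images of the nodes of a tree
under a tree-pattern. -/
inductive VTree (V : Type) : Type where
  | node : V → List (VTree V) → VTree V

namespace VTree

variable {V : Type}

/-- the vertex at the root -/
def root : VTree V → V
  | .node u _ => u

/-- the list of subtrees at the root -/
def children : VTree V → List (VTree V)
  | .node _ ps => ps

end VTree

/-- `isPattern G t p` : the decoration `p` of the tree `t` by vertices of `G` is a
tree-pattern of `G` with respect to `t`: node labels match, every tree edge is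
realized by an edge of `G` with matching label, and sibling nodes are mapped to
distinct vertices. -/
def isPattern {A : Type} (G : LGraph A) : LTree A → VTree G.V → Prop
  | .node a cs, .node u ps =>
    G.lv u = a ∧ ps.length = cs.length ∧
    (∀ i j : Fin ps.length, i ≠ j → (ps.get i).root ≠ (ps.get j).root) ∧
    ∀ i : Fin ps.length, ∀ (h : (i : ℕ) < cs.length),
      G.E u (ps.get i).root ∧ G.le u (ps.get i).root = (cs.get ⟨i, h⟩).1 ∧
      isPattern G (cs.get ⟨i, h⟩).2 (ps.get i)
termination_by _ p => sizeOf p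
decreasing_by
  have h1 : sizeOf (ps.get i) < sizeOf ps := List.sizeOf_lt_of_mem (ps.get_mem i)
  simp only [VTree.node.sizeOf_spec]
  omega

/-- `psiRoot G t u` : number of tree-patterns of `G` with respect to `t` rooted at `u`. -/
noncomputable def psiRoot {A : Type} (G : LGraph A) (t : LTree A) (u : G.V) : ℕ :=
  Set.ncard {p : VTree G.V | isPattern G t p ∧ p.root = u}

/-- `psi G t` : number of tree-patterns of `G` with respect to `t`. -/
noncomputable def psi {A : Type} (G : LGraph A) (t : LTree A) : ℕ :=
  Set.ncard {p : VTree G.V | isPattern G t p}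

/-- `isWalk G w` : `w` is a walk of length `n` in `G` (consecutive vertices joined by edges). -/
def isWalk {A : Type} (G : LGraph A) {n : ℕ} (w : Fin (n + 1) → G.V) : Prop :=
  ∀ i j : Fin (n + 1), (j : ℕ) = (i : ℕ) + 1 → G.E (w i) (w j)

/-- `noTotWalk G w` : the walk `w` is no-tottering: `v_i ≠ v_{i+2}` for all `i`. -/
def noTotWalk {A : Type} (G : LGraph A) {n : ℕ} (w : Fin (n + 1) → G.V) : Prop :=
  ∀ i j : Fin (n + 1), (j : ℕ) = (i : ℕ) + 2 → w i ≠ w j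

/-- `sameLabels G1 G2 w1 w2` : the two walks are identically labeled (corresponding
vertices and edges carry the same labels). -/
def sameLabels {A : Type} (G1 G2 : LGraph A) {n : ℕ}
    (w1 : Fin (n + 1) → G1.V) (w2 : Fin (n + 1) → G2.V) : Prop :=
  (∀ i, G1.lv (w1 i) = G2.lv (w2 i)) ∧
    (∀ i j : Fin (n + 1), (j : ℕ) = (i : ℕ) + 1 → G1.le (w1 i) (w1 j) = G2.le (w2 i) (w2 j))

/-- Walk-count kernel `K^n_Walk`: number of pairs of identically labeled walks of
length `n` in `G1` and `G2`. -/
noncomputable def walkKernel {A : Type} (G1 G2 : LGraph A) (n : ℕ) : ℝ :=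
  ∑ w1 : Fin (n + 1) → G1.V, ∑ w2 : Fin (n + 1) → G2.V,
    if isWalk G1 w1 ∧ isWalk G2 w2 ∧ sameLabels G1 G2 w1 w2 then 1 else 0



set_option linter.unusedVariables false

namespace Aux

variable {A V : Type}

/-- chain tree of depth n+1 -/
def chainF : (n : ℕ) → (Fin (n+1) → A) → (Fin n → A) → LTree A
  | 0, a, _ => .node (a 0) []
  | n+1, a, e => .node (a 0) [(e 0, chainF n (a ∘ Fin.succ) (e ∘ Fin.succ))]

def vchainF : (n : ℕ) → (Fin (n+1) → V) → VTree V
  | 0, w => .node (w 0) []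
  | n+1, w => .node (w 0) [vchainF n (w ∘ Fin.succ)]

lemma vchainF_root : ∀ (n : ℕ) (w : Fin (n+1) → V), (vchainF n w).root = w 0
  | 0, w => rfl
  | n+1, w => rfl

lemma vchainF_inj : ∀ (n : ℕ) (w w' : Fin (n+1) → V), vchainF n w = vchainF n w' → w = w' := by
  intro n
  induction n with
  | zero =>
    intro w w' hw
    simp only [vchainF, VTree.node.injEq] at hw
    exact funext fun i => Fin.cases hw.1 (fun j => j.elim0) i
  | succ n ih =>
    intro w w' hw
    simp only [vchainF, VTree.node.injEq, List.cons.injEq, and_true] at hw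
    have h2 := ih _ _ hw.2
    funext i
    induction i using Fin.cases with
    | zero => exact hw.1
    | succ j => exact congrFun h2 j

lemma chainF_inj : ∀ (n : ℕ) (a a' : Fin (n+1) → A) (e e' : Fin n → A),
    chainF n a e = chainF n a' e' → a = a' ∧ e = e' := by
  intro n
  induction n with
  | zero =>
    intro a a' e e' hw
    simp only [chainF, LTree.node.injEq] at hw
    constructor
    · exact funext fun i => Fin.cases hw.1 (fun j => j.elim0) i
    · funext i; exact i.elim0
  | succ n ih =>
    intro a a' e e' hw
    simp only [chainF, LTree.node.injEq, List.cons.injEq, Prod.mk.injEq, and_true] at hw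
    obtain ⟨h0, he0, hrec⟩ := hw
    obtain ⟨ha, he⟩ := ih _ _ _ _ hrec
    constructor
    · funext i
      induction i using Fin.cases with
      | zero => exact h0
      | succ j => exact congrFun ha j
    · funext i
      induction i using Fin.cases with
      | zero => exact he0
      | succ j => exact congrFun he j

lemma depth_chainF : ∀ (n : ℕ) (a : Fin (n+1) → A) (e : Fin n → A),
    (chainF n a e).depth = n + 1 := by
  intro n
  induction n with
  | zero => intro a e; simp [chainF, LTree.depth, LTree.depthList]
  | succ n ih =>
    intro a e
    simp [chainF, LTree.depth, LTree.depthList, ih]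
    omega

lemma leaves_chainF : ∀ (n : ℕ) (a : Fin (n+1) → A) (e : Fin n → A),
    (chainF n a e).leaves = 1 := by
  intro n
  induction n with
  | zero => intro a e; simp [chainF, LTree.leaves]
  | succ n ih =>
    intro a e
    simp [chainF, LTree.leaves, LTree.leavesList, ih]

lemma branch_chainF (n : ℕ) (a : Fin (n+1) → A) (e : Fin n → A) :
    (chainF n a e).branch = 0 := by
  simp [LTree.branch, leaves_chainF]


theorem leaves_pos : ∀ t : LTree A, 1 ≤ t.leaves
  | .node _ [] => by simp [LTree.leaves]
  | .node a ((x, t) :: cs) => by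
      have h1 := leaves_pos t
      have : (LTree.node a ((x, t) :: cs)).leaves = t.leaves + LTree.leavesList cs := by
        rw [LTree.leaves]
        rfl
      omega
termination_by t => sizeOf t
decreasing_by
  simp only [LTree.node.sizeOf_spec, List.cons.sizeOf_spec, Prod.mk.sizeOf_spec]
  omega

lemma depth_le_depthList : ∀ (cs : List (A × LTree A)) (x : A) (t : LTree A),
    (x, t) ∈ cs → t.depth ≤ LTree.depthList cs := by
  intro cs
  induction cs with
  | nil => intro x t h; simp at h
  | cons c rest ih =>
    intro x t h
    obtain ⟨y, s⟩ := c
    rw [List.mem_cons] at h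
    rw [LTree.depthList]
    rcases h with h | h
    · rw [(Prod.mk.injEq ..).mp h |>.2]; exact le_max_left _ _
    · exact le_trans (ih x t h) (le_max_right _ _)

/-- trees with one leaf and depth n+1 are chains -/
lemma chain_of_branch_zero : ∀ (n : ℕ) (t : LTree A), t.leaves = 1 → t.depth = n + 1 →
    ∃ a e, t = chainF n a e := by
  intro n
  induction n with
  | zero =>
    intro t h1 h2
    obtain ⟨a, cs⟩ := t
    cases cs with
    | nil => exact ⟨fun _ => a, fun i => i.elim0, rfl⟩
    | cons c rest =>
      obtain ⟨x, s⟩ := c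
      exfalso
      rw [LTree.depth] at h2
      have := depth_le_depthList ((x,s) :: rest) x s (by simp)
      have hd : 1 ≤ s.depth := by obtain ⟨b, bs⟩ := s; rw [LTree.depth]; omega
      omega
  | succ n ih =>
    intro t h1 h2
    obtain ⟨a, cs⟩ := t
    cases cs with
    | nil =>
      exfalso
      rw [LTree.depth] at h2
      rw [LTree.depthList] at h2
      omega
    | cons c rest =>
      obtain ⟨x, s⟩ := c
      cases rest with
      | cons c' rest' =>
        exfalso
        obtain ⟨y, s'⟩ := c'
        have e1 : (LTree.node a ((x,s) :: (y,s') :: rest')).leaves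
            = s.leaves + (s'.leaves + LTree.leavesList rest') := by
          rw [LTree.leaves]; rfl
        have := leaves_pos s
        have := leaves_pos s'
        omega
      | nil =>
        have e1 : (LTree.node a [(x,s)]).leaves = s.leaves + 0 := by rw [LTree.leaves]; rfl
        have hs1 : s.leaves = 1 := by omega
        have e2 : (LTree.node a [(x,s)]).depth = 1 + max s.depth 0 := by
          rw [LTree.depth]; rfl
        have hs2 : s.depth = n + 1 := by
          have hd : 1 ≤ s.depth := by obtain ⟨b, bs⟩ := s; rw [LTree.depth]; omega
          omega
        obtain ⟨a', e', hs⟩ := ih s hs1 hs2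
        refine ⟨Fin.cases a a', Fin.cases x e', ?_⟩
        rw [chainF, hs]
        congr 1

end Aux

namespace Aux

variable {A : Type}

lemma isPattern_chainF (G : LGraph A) : ∀ (n : ℕ) (a : Fin (n+1) → A) (e : Fin n → A)
    (p : VTree G.V),
    isPattern G (chainF n a e) p ↔
    ∃ w : Fin (n+1) → G.V, p = vchainF n w ∧ (∀ i, G.lv (w i) = a i) ∧
      ∀ k : Fin n, G.E (w k.castSucc) (w k.succ) ∧ G.le (w k.castSucc) (w k.succ) = e k := by
  intro n
  induction n with
  | zero =>
    intro a e p
    obtain ⟨u, ps⟩ := p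
    rw [chainF, isPattern]
    constructor
    · rintro ⟨hlv, hlen, -, -⟩
      rw [List.length_nil, List.length_eq_zero_iff] at hlen
      subst hlen
      exact ⟨fun _ => u, rfl, fun i => Fin.cases hlv (fun j => j.elim0) i, fun k => k.elim0⟩
    · rintro ⟨w, hp, hlv, -⟩
      rw [show vchainF 0 w = .node (w 0) [] from rfl] at hp
      injection hp with h1 h2
      subst h1; subst h2
      exact ⟨hlv 0, rfl, fun i => i.elim0, fun i => i.elim0⟩
  | succ n ih =>
    intro a e p
    obtain ⟨u, ps⟩ := p
    rw [chainF, isPattern]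
    constructor
    · rintro ⟨hlv, hlen, -, hcond⟩
      simp only [List.length_cons, List.length_nil] at hlen
      rw [List.length_eq_one_iff] at hlen
      obtain ⟨q, rfl⟩ := hlen
      have h0 := hcond ⟨0, by simp⟩ (by simp)
      simp only [List.get] at h0
      obtain ⟨hE, hle, hpat⟩ := h0
      rw [ih] at hpat
      obtain ⟨w', hq, hlv', hcond'⟩ := hpat
      refine ⟨Fin.cases u w', ?_, ?_, ?_⟩
      · rw [show vchainF (n+1) (Fin.cases u w') =
          .node u [vchainF n (Fin.cases u w' ∘ Fin.succ)] from rfl]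
        rw [show (Fin.cases u w' ∘ Fin.succ : Fin (n+1) → G.V) = w' from rfl, hq]
      · intro i
        induction i using Fin.cases with
        | zero => exact hlv
        | succ j => exact hlv' j
      · intro k
        induction k using Fin.cases with
        | zero =>
          have hr : (vchainF n w').root = w' 0 := vchainF_root n w'
          rw [hq, hr] at hE hle
          exact ⟨hE, hle⟩
        | succ j =>
          have h := hcond' j
          rw [show (Fin.cases u w' : Fin (n+2) → G.V) j.succ.castSucc = w' j.castSucc from by
            rw [← Fin.succ_castSucc]; rfl]
          rw [show (Fin.cases u w' : Fin (n+2) → G.V) j.succ.succ = w' j.succ from rfl]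
          exact h
    · rintro ⟨w, hp, hlv, hcond⟩
      rw [show vchainF (n+1) w = .node (w 0) [vchainF n (w ∘ Fin.succ)] from rfl] at hp
      injection hp with h1 h2
      subst h1; subst h2
      have h0 := hcond 0
      rw [show (0 : Fin (n+1)).castSucc = 0 from rfl] at h0
      refine ⟨hlv 0, rfl, ?_, ?_⟩
      · intro i j hij
        exfalso
        have h1 : (i : ℕ) < 1 := by simpa using i.isLt
        have h2 : (j : ℕ) < 1 := by simpa using j.isLt
        exact hij (Fin.ext (by omega))
      · intro i hi
        have h1 : (i : ℕ) < 1 := by simpa using i.isLt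
        have hi0 : i = ⟨0, by simp⟩ := Fin.ext (by simp)
        subst hi0
        simp only [List.get]
        rw [vchainF_root]
        refine ⟨h0.1, h0.2, ?_⟩
        rw [ih]
        refine ⟨w ∘ Fin.succ, rfl, fun i => hlv i.succ, fun k => ?_⟩
        have h := hcond k.succ
        rw [← Fin.succ_castSucc] at h
        exact h

end Aux

namespace Aux

variable {A : Type}

noncomputable def labF (G : LGraph A) (n : ℕ) (w : Fin (n+1) → G.V) : LTree A :=
  chainF n (fun i => G.lv (w i)) (fun k => G.le (w k.castSucc) (w k.succ))

lemma fin_pair_iff {n : ℕ} {P : Fin (n+1) → Fin (n+1) → Prop} :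
    (∀ i j : Fin (n+1), (j : ℕ) = (i : ℕ) + 1 → P i j) ↔ ∀ k : Fin n, P k.castSucc k.succ := by
  constructor
  · intro H k
    exact H k.castSucc k.succ (by simp)
  · intro H i j hij
    have hi : (i : ℕ) < n := by have := j.isLt; omega
    have h1 : i = (⟨i, hi⟩ : Fin n).castSucc := Fin.ext rfl
    have h2 : j = (⟨i, hi⟩ : Fin n).succ := Fin.ext (by simp [hij])
    rw [h1, h2]
    exact H _

lemma isWalk_iff {G : LGraph A} {n : ℕ} {w : Fin (n+1) → G.V} :
    isWalk G w ↔ ∀ k : Fin n, G.E (w k.castSucc) (w k.succ) := fin_pair_iff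

lemma sameLabels_iff_labF {G1 G2 : LGraph A} {n : ℕ} {w1 : Fin (n+1) → G1.V}
    {w2 : Fin (n+1) → G2.V} :
    sameLabels G1 G2 w1 w2 ↔ labF G1 n w1 = labF G2 n w2 := by
  unfold sameLabels labF
  constructor
  · rintro ⟨h1, h2⟩
    congr 1
    · funext i; exact h1 i
    · funext k; exact fin_pair_iff.mp h2 k
  · intro h
    obtain ⟨h1, h2⟩ := chainF_inj _ _ _ _ _ h
    exact ⟨fun i => congrFun h1 i, fin_pair_iff.mpr fun k => congrFun h2 k⟩

lemma vchainF_injective (V : Type) (n : ℕ) : Function.Injective (vchainF (V := V) n) :=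
  fun w w' h => vchainF_inj n w w' h

lemma psi_chainF (G : LGraph A) (n : ℕ) (a : Fin (n+1) → A) (e : Fin n → A) :
    psi G (chainF n a e) =
    (Finset.univ.filter
      (fun w : Fin (n+1) → G.V => isWalk G w ∧ labF G n w = chainF n a e)).card := by
  unfold psi
  have hset : {p : VTree G.V | isPattern G (chainF n a e) p} =
      vchainF n '' {w : Fin (n+1) → G.V | isWalk G w ∧ labF G n w = chainF n a e} := by
    ext p
    rw [Set.mem_setOf_eq, isPattern_chainF]
    constructor
    · rintro ⟨w, rfl, hlv, hcond⟩
      refine ⟨w, ⟨isWalk_iff.mpr fun k => (hcond k).1, ?_⟩, rfl⟩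
      unfold labF
      congr 1
      · funext i; exact hlv i
      · funext k; exact (hcond k).2
    · rintro ⟨w, ⟨hw, hlab⟩, rfl⟩
      obtain ⟨h1, h2⟩ := chainF_inj _ _ _ _ _ hlab
      exact ⟨w, rfl, fun i => congrFun h1 i,
        fun k => ⟨isWalk_iff.mp hw k, congrFun h2 k⟩⟩
  rw [hset, Set.ncard_image_of_injective _ (vchainF_injective G.V n)]
  rw [show {w : Fin (n+1) → G.V | isWalk G w ∧ labF G n w = chainF n a e} =
    ↑(Finset.univ.filter
      (fun w : Fin (n+1) → G.V => isWalk G w ∧ labF G n w = chainF n a e)) from by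
    ext w; simp]
  exact Set.ncard_coe_finset _

lemma branch_labF (G : LGraph A) (n : ℕ) (w : Fin (n+1) → G.V) :
    (labF G n w).branch = 0 := branch_chainF _ _ _

lemma depth_labF (G : LGraph A) (n : ℕ) (w : Fin (n+1) → G.V) :
    (labF G n w).depth = n + 1 := depth_chainF _ _ _

lemma count_pairs (G1 G2 : LGraph A) (n : ℕ) (C : Finset (LTree A))
    (hC1 : ∀ t ∈ C, t.branch = 0 ∧ t.depth = n + 1)
    (hC2 : ∀ t : LTree A, t.branch = 0 → t.depth = n + 1 →
      psi G1 t ≠ 0 → psi G2 t ≠ 0 → t ∈ C) :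
    (Finset.univ.filter (fun z : ((Fin (n+1) → G1.V) × (Fin (n+1) → G2.V)) =>
       isWalk G1 z.1 ∧ isWalk G2 z.2 ∧ sameLabels G1 G2 z.1 z.2)).card
    = ∑ t ∈ C, psi G1 t * psi G2 t := by
  set s := Finset.univ.filter (fun z : ((Fin (n+1) → G1.V) × (Fin (n+1) → G2.V)) =>
       isWalk G1 z.1 ∧ isWalk G2 z.2 ∧ sameLabels G1 G2 z.1 z.2) with hs
  have hmem : ∀ z, z ∈ s ↔
      isWalk G1 z.1 ∧ isWalk G2 z.2 ∧ labF G1 n z.1 = labF G2 n z.2 := by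
    intro z
    rw [hs, Finset.mem_filter, sameLabels_iff_labF]
    simp
  have hmaps : ∀ z ∈ s, labF G1 n z.1 ∈ C := by
    intro z hz
    rw [hmem] at hz
    obtain ⟨hw1, hw2, hlab⟩ := hz
    apply hC2 _ (branch_labF _ _ _) (depth_labF _ _ _)
    · show psi G1 (labF G1 n z.1) ≠ 0
      unfold labF
      rw [psi_chainF G1 n]
      intro hcard
      rw [Finset.card_eq_zero, Finset.eq_empty_iff_forall_notMem] at hcard
      exact hcard z.1 (Finset.mem_filter.mpr ⟨Finset.mem_univ _, hw1, rfl⟩)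
    · show psi G2 (labF G1 n z.1) ≠ 0
      rw [hlab]
      unfold labF
      rw [psi_chainF G2 n]
      intro hcard
      rw [Finset.card_eq_zero, Finset.eq_empty_iff_forall_notMem] at hcard
      exact hcard z.2 (Finset.mem_filter.mpr ⟨Finset.mem_univ _, hw2, rfl⟩)
  rw [Finset.card_eq_sum_card_fiberwise hmaps]
  refine Finset.sum_congr rfl fun t ht => ?_
  obtain ⟨hb, hd⟩ := hC1 t ht
  have hl1 : t.leaves = 1 := by
    have := leaves_pos t
    unfold LTree.branch at hb
    omega
  obtain ⟨a, e, rfl⟩ := chain_of_branch_zero n t hl1 hd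
  rw [psi_chainF G1 n, psi_chainF G2 n, ← Finset.card_product]
  congr 1
  ext z
  simp only [Finset.mem_filter, Finset.mem_product, Finset.mem_univ, true_and]
  rw [hmem]
  constructor
  · rintro ⟨⟨hw1, hw2, hlab⟩, hl1⟩
    exact ⟨⟨hw1, hl1⟩, ⟨hw2, by rw [← hlab, hl1]⟩⟩
  · rintro ⟨⟨hw1, hl1⟩, hw2, hl2⟩
    exact ⟨⟨hw1, hw2, by rw [hl1, hl2]⟩, hl1⟩

lemma walkKernel_eq_card (G1 G2 : LGraph A) (n : ℕ) :
    walkKernel G1 G2 n =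
    ((Finset.univ.filter (fun z : ((Fin (n+1) → G1.V) × (Fin (n+1) → G2.V)) =>
       isWalk G1 z.1 ∧ isWalk G2 z.2 ∧ sameLabels G1 G2 z.1 z.2)).card : ℝ) := by
  rw [walkKernel, ← Finset.sum_product', Finset.univ_product_univ, Finset.sum_boole]

end Aux

namespace Aux

variable {A V : Type}

def treeOf (G : LGraph A) : VTree G.V → LTree A
  | .node u ps => .node (G.lv u) (ps.attach.map fun q => (G.le u q.1.root, treeOf G q.1))
termination_by p => sizeOf p
decreasing_by
  have h1 : sizeOf q.1 < sizeOf ps := List.sizeOf_lt_of_mem q.2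
  simp only [VTree.node.sizeOf_spec]
  omega

lemma tree_eq (G : LGraph A) : ∀ (N : ℕ) (p : VTree G.V) (t : LTree A), sizeOf p ≤ N →
    isPattern G t p → t = treeOf G p := by
  intro N
  induction N with
  | zero =>
    intro p t hsz
    obtain ⟨u, ps⟩ := p
    exfalso
    simp only [VTree.node.sizeOf_spec] at hsz
    omega
  | succ N ih =>
    intro p t hsz hpat
    obtain ⟨u, ps⟩ := p
    obtain ⟨a, cs⟩ := t
    rw [isPattern] at hpat
    obtain ⟨hlv, hlen, hdist, hcond⟩ := hpat
    rw [treeOf]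
    rw [LTree.node.injEq]
    refine ⟨hlv.symm, ?_⟩
    apply List.ext_getElem
    · simp [hlen]
    · intro i hi1 hi2
      have hilt : i < ps.length := by simpa using hi2
      have hcs : i < cs.length := by omega
      have h := hcond ⟨i, hilt⟩ hcs
      obtain ⟨hE, hle, hpat'⟩ := h
      have hszi : sizeOf (ps.get ⟨i, hilt⟩) ≤ N := by
        have h1 : sizeOf (ps.get ⟨i, hilt⟩) < sizeOf ps :=
          List.sizeOf_lt_of_mem (ps.get_mem _)
        simp only [VTree.node.sizeOf_spec] at hsz
        omega
      have := ih _ _ hszi hpat'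
      simp only [List.getElem_map, List.getElem_attach]
      refine Prod.ext ?_ ?_
      · simp only []
        rw [show cs[i] = cs.get ⟨i, hcs⟩ from rfl, ← hle]
        rfl
      · simp only []
        rw [show cs[i] = cs.get ⟨i, hcs⟩ from rfl, this]
        rfl

inductive Bdd (B : ℕ) : ℕ → VTree V → Prop
  | node (u : V) (ps : List (VTree V)) (d : ℕ) :
      ps.length ≤ B → (∀ q ∈ ps, Bdd B d q) → Bdd B (d+1) (.node u ps)

lemma Bdd.mono {B : ℕ} : ∀ {d d' : ℕ} {p : VTree V}, Bdd B d p → d ≤ d' → Bdd B d' p := by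
  intro d d' p h
  induction h generalizing d' with
  | node u ps d hlen hmem ih =>
    intro hdd
    obtain ⟨d'', rfl⟩ : ∃ d'', d' = d'' + 1 := ⟨d' - 1, by omega⟩
    exact Bdd.node u ps d'' hlen (fun q hq => ih q hq (by omega))

lemma pattern_Bdd (G : LGraph A) : ∀ (N : ℕ) (p : VTree G.V) (t : LTree A), sizeOf p ≤ N →
    isPattern G t p → Bdd (Fintype.card G.V) t.depth p := by
  intro N
  induction N with
  | zero =>
    intro p t hsz
    obtain ⟨u, ps⟩ := p
    exfalso
    simp only [VTree.node.sizeOf_spec] at hsz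
    omega
  | succ N ih =>
    intro p t hsz hpat
    obtain ⟨u, ps⟩ := p
    obtain ⟨a, cs⟩ := t
    rw [isPattern] at hpat
    obtain ⟨hlv, hlen, hdist, hcond⟩ := hpat
    rw [LTree.depth, Nat.add_comm]
    constructor
    · have hinj : Function.Injective (fun i : Fin ps.length => (ps.get i).root) := by
        intro i j hij
        by_contra hne
        exact hdist i j hne hij
      calc ps.length = Fintype.card (Fin ps.length) := (Fintype.card_fin _).symm
        _ ≤ _ := Fintype.card_le_of_injective _ hinj
    · intro q hq
      obtain ⟨i, rfl⟩ := List.mem_iff_get.mp hq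
      have hcs : (i : ℕ) < cs.length := by omega
      have h := hcond i hcs
      obtain ⟨hE, hle, hpat'⟩ := h
      have hszi : sizeOf (ps.get i) ≤ N := by
        have h1 : sizeOf (ps.get i) < sizeOf ps :=
          List.sizeOf_lt_of_mem (ps.get_mem _)
        simp only [VTree.node.sizeOf_spec] at hsz
        omega
      refine Bdd.mono (ih _ _ hszi hpat') ?_
      have := depth_le_depthList cs (cs.get ⟨i, hcs⟩).1 (cs.get ⟨i, hcs⟩).2
        (by simpa using cs.get_mem _ _)
      exact this

lemma finite_lists {α : Type} {s : Set α} (hs : s.Finite) :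
    ∀ n : ℕ, {l : List α | l.length ≤ n ∧ ∀ x ∈ l, x ∈ s}.Finite := by
  intro n
  induction n with
  | zero =>
    apply Set.Finite.subset (Set.finite_singleton ([] : List α))
    rintro l ⟨hl, -⟩
    simp only [Nat.le_zero, List.length_eq_zero_iff] at hl
    simp [hl]
  | succ n ih =>
    apply Set.Finite.subset (Set.Finite.insert ([] : List α)
      (Set.Finite.image (fun z : α × List α => z.1 :: z.2) (hs.prod ih)))
    rintro l ⟨hl, hmem⟩
    cases l with
    | nil => exact Set.mem_insert _ _
    | cons x l' =>
      apply Set.mem_insert_of_mem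
      refine ⟨(x, l'), ⟨hmem x (by simp), ?_, fun y hy => hmem y (by simp [hy])⟩, rfl⟩
      simpa using hl

lemma Bdd_finite [Fintype V] (B : ℕ) : ∀ d : ℕ, {p : VTree V | Bdd B d p}.Finite := by
  intro d
  induction d with
  | zero =>
    apply Set.Finite.subset Set.finite_empty
    intro p hp
    exact absurd hp (by rintro ⟨⟩)
  | succ d ih =>
    apply Set.Finite.subset (Set.Finite.image (fun z : V × List (VTree V) => VTree.node z.1 z.2)
      ((Set.finite_univ (α := V)).prod (finite_lists ih B)))
    rintro p hp
    rw [Set.mem_setOf_eq] at hp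
    cases hp with
    | node u ps d' hlen hmem =>
      exact ⟨(u, ps), ⟨trivial, hlen, hmem⟩, rfl⟩

lemma supp_finite (G1 : LGraph A) (h : ℕ) :
    {t : LTree A | t.depth ≤ h ∧ psi G1 t ≠ 0}.Finite := by
  apply Set.Finite.subset (Set.Finite.image (treeOf G1) (Bdd_finite (Fintype.card G1.V) h))
  rintro t ⟨hd, hpsi⟩
  have hne : {p : VTree G1.V | isPattern G1 t p}.Nonempty :=
    Set.nonempty_of_ncard_ne_zero hpsi
  obtain ⟨p, hp⟩ := hne
  refine ⟨p, ?_, (tree_eq G1 (sizeOf p) p t le_rfl hp).symm⟩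
  exact Bdd.mono (pattern_Bdd G1 (sizeOf p) p t le_rfl hp) hd

end Aux

namespace Aux

variable {A : Type}

lemma depth_pos (t : LTree A) : 1 ≤ t.depth := by
  obtain ⟨a, cs⟩ := t
  rw [LTree.depth]
  omega

theorem main {A : Type} (G1 G2 : LGraph A) (h : ℕ) (hh : 1 ≤ h) :
    Filter.Tendsto
      (fun lam : ℝ =>
        ∑ᶠ t ∈ {t : LTree A | 1 ≤ t.depth ∧ t.depth ≤ h},
          lam ^ t.branch * (psi G1 t : ℝ) * (psi G2 t : ℝ))
      (nhdsWithin 0 (Set.Ioi 0))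
      (nhds (∑ n ∈ Finset.range h, walkKernel G1 G2 n)) := by
  have hfin : {t : LTree A | t.depth ≤ h ∧ psi G1 t ≠ 0 ∧ psi G2 t ≠ 0}.Finite :=
    (supp_finite G1 h).subset (by rintro t ⟨h1, h2, h3⟩; exact ⟨h1, h2⟩)
  set F : Finset (LTree A) := hfin.toFinset with hF
  have hmemF : ∀ t : LTree A, t ∈ F ↔ t.depth ≤ h ∧ psi G1 t ≠ 0 ∧ psi G2 t ≠ 0 := by
    intro t; rw [hF, Set.Finite.mem_toFinset]; rfl
  have key : ∀ lam : ℝ,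
      (∑ᶠ t ∈ {t : LTree A | 1 ≤ t.depth ∧ t.depth ≤ h},
        lam ^ t.branch * (psi G1 t : ℝ) * (psi G2 t : ℝ)) =
      ∑ t ∈ F, lam ^ t.branch * (psi G1 t : ℝ) * (psi G2 t : ℝ) := by
    intro lam
    apply finsum_mem_eq_sum_of_inter_support_eq
    ext t
    simp only [Set.mem_inter_iff, Set.mem_setOf_eq, Function.mem_support, Finset.mem_coe]
    constructor
    · rintro ⟨⟨h1, h2⟩, hg⟩
      refine ⟨?_, hg⟩
      rw [hmemF]
      refine ⟨h2, ?_, ?_⟩ <;> intro h0 <;> apply hg <;> simp [h0]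
    · rintro ⟨ht, hg⟩
      rw [hmemF] at ht
      exact ⟨⟨depth_pos t, ht.1⟩, hg⟩
  rw [show (fun lam : ℝ =>
        ∑ᶠ t ∈ {t : LTree A | 1 ≤ t.depth ∧ t.depth ≤ h},
          lam ^ t.branch * (psi G1 t : ℝ) * (psi G2 t : ℝ)) =
      (fun lam : ℝ => ∑ t ∈ F, lam ^ t.branch * (psi G1 t : ℝ) * (psi G2 t : ℝ)) from
    funext key]
  -- value identification
  have hval : ∑ t ∈ F, (0:ℝ) ^ t.branch * (psi G1 t : ℝ) * (psi G2 t : ℝ)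
      = ∑ n ∈ Finset.range h, walkKernel G1 G2 n := by
    have lhs1 : ∑ t ∈ F, (0:ℝ) ^ t.branch * (psi G1 t : ℝ) * (psi G2 t : ℝ)
        = ∑ t ∈ F.filter (fun t => t.branch = 0), (psi G1 t : ℝ) * (psi G2 t : ℝ) := by
      rw [Finset.sum_filter]
      refine Finset.sum_congr rfl fun t _ => ?_
      rcases Nat.eq_zero_or_pos t.branch with hb | hb
      · simp [hb]
      · rw [if_neg (by omega), zero_pow (by omega), zero_mul, zero_mul]
    rw [lhs1]
    have rhs1 : ∀ n ∈ Finset.range h, walkKernel G1 G2 n =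
        ∑ t ∈ (F.filter (fun t => t.branch = 0)).filter (fun t => t.depth - 1 = n),
          (psi G1 t : ℝ) * (psi G2 t : ℝ) := by
      intro n hn
      rw [Finset.mem_range] at hn
      rw [walkKernel_eq_card G1 G2 n,
        count_pairs G1 G2 n ((F.filter (fun t => t.branch = 0)).filter (fun t => t.depth - 1 = n))
          ?_ ?_]
      · push_cast
        rfl
      · intro t ht
        simp only [Finset.mem_filter] at ht
        obtain ⟨⟨htF, hb⟩, hd⟩ := ht
        have := depth_pos t
        exact ⟨hb, by omega⟩
      · intro t hb hd hp1 hp2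
        simp only [Finset.mem_filter]
        refine ⟨⟨?_, hb⟩, by omega⟩
        rw [hmemF]
        exact ⟨by omega, hp1, hp2⟩
    rw [Finset.sum_congr rfl rhs1]
    symm
    apply Finset.sum_fiberwise_of_maps_to
    intro t ht
    simp only [Finset.mem_filter] at ht
    obtain ⟨htF, -⟩ := ht
    rw [hmemF] at htF
    have := depth_pos t
    rw [Finset.mem_range]
    omega
  rw [← hval]
  have hcont : Continuous (fun lam : ℝ =>
      ∑ t ∈ F, lam ^ t.branch * (psi G1 t : ℝ) * (psi G2 t : ℝ)) := by
    apply continuous_finset_sum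
    intro t _
    exact ((continuous_pow t.branch).mul continuous_const).mul continuous_const
  exact (hcont.tendsto 0).mono_left nhdsWithin_le_nhds

end Aux

/-- As `λ → 0⁺`, the until-N branching-based kernel of order `h` converges to the
sum of the walk-count kernels of lengths `0` through `h-1`. -/
theorem stmt_11 {A : Type} (G1 G2 : LGraph A) (h : ℕ) (hh : 1 ≤ h) :
    Filter.Tendsto
      (fun lam : ℝ =>
        ∑ᶠ t ∈ {t : LTree A | 1 ≤ t.depth ∧ t.depth ≤ h},
          lam ^ t.branch * (psi G1 t : ℝ) * (psi G2 t : ℝ))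
      (nhdsWithin 0 (Set.Ioi 0))
      (nhds (∑ n ∈ Finset.range h, walkKernel G1 G2 n)) :=
  Aux.main G1 G2 h hh
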